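/- For every complex number z, the 2x2 matrix product exp(z J_-) * exp(alpha J_+) * exp(beta J_3), with alpha = -conj(z)/(1+|z|^2) and beta = -log(1+|z|^2), is a special unitary matrix (i.e., lies in SU(2)), where J_3 = (1/2) diag(1,-1), J_+ = [[0,1],[0,0]], J_- = [[0,0],[1,0]] in the fundamental representation. -/

import Mathlib

open Complex Matrix

/-- `J₃` in the fundamental representation of `su(2)`. -/
noncomputable def fJ3 : Matrix (Fin 2) (Fin 2) ℂ := !![1/2, 0; 0, -1/2]

/-- `J₊`. -/
def fJplus : Matrix (Fin 2) (Fin 2) ℂ := !![0, 1; 0, 0]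

/-- `J₋`. -/
def fJminus : Matrix (Fin 2) (Fin 2) ℂ := !![0, 0; 1, 0]

lemma exp_sq_zero (A : Matrix (Fin 2) (Fin 2) ℂ) (h : A ^ 2 = 0) :
    NormedSpace.exp A = 1 + A := by
  rw [NormedSpace.exp_eq_tsum (𝕂 := ℂ)]
  show (∑' n : ℕ, (n.factorial : ℂ)⁻¹ • A ^ n) = 1 + A
  have hz : ∀ n ∉ ({0, 1} : Finset ℕ), ((n.factorial : ℂ)⁻¹ • A ^ n) = 0 := by
    intro n hn
    simp only [Finset.mem_insert, Finset.mem_singleton, not_or] at hn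
    have h2 : 2 ≤ n := by omega
    have : A ^ n = A ^ 2 * A ^ (n - 2) := by
      rw [← pow_add]; congr 1; omega
    rw [this, h, zero_mul, smul_zero]
  rw [tsum_eq_sum hz]
  simp [Finset.sum_pair (by norm_num : (0:ℕ) ≠ 1)]

lemma exp_J3 (c : ℝ) :
    NormedSpace.exp ((c : ℂ) • fJ3) =
      !![(Real.exp (c / 2) : ℂ), 0; 0, (Real.exp (-c / 2) : ℂ)] := by
  have hd : (c : ℂ) • fJ3 = Matrix.diagonal ![(c / 2 : ℂ), (-c / 2 : ℂ)] := by
    ext i j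
    fin_cases i <;> fin_cases j <;>
      simp [fJ3, Matrix.diagonal] <;> ring
  rw [hd, Matrix.exp_diagonal]
  ext i j
  fin_cases i <;> fin_cases j <;>
    simp [Matrix.diagonal, ← Complex.exp_eq_exp_ℂ, ← Complex.ofReal_exp] <;>
    norm_num

theorem gauge_decomposition_in_SU2 (z : ℂ) :
    letI M := NormedSpace.exp (z • fJminus) *
      NormedSpace.exp ((-(starRingEnd ℂ z) / (1 + ‖z‖ ^ 2)) • fJplus) *
      NormedSpace.exp (((-Real.log (1 + ‖z‖ ^ 2) : ℝ) : ℂ) • fJ3)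
    M * Mᴴ = 1 ∧ M.det = 1 := by
  set r : ℝ := 1 + ‖z‖ ^ 2 with hr
  have hrpos : 0 < r := by positivity
  set α : ℂ := -(starRingEnd ℂ z) / (1 + ‖z‖ ^ 2) with hα
  set ea : ℝ := Real.exp (-Real.log r / 2) with hea
  set eb : ℝ := Real.exp (-(-Real.log r) / 2) with heb
  have h1 : NormedSpace.exp (z • fJminus) = !![1, 0; z, 1] := by
    rw [exp_sq_zero]
    · ext i j; fin_cases i <;> fin_cases j <;> simp [fJminus]
    · ext i j; fin_cases i <;> fin_cases j <;>
        simp [fJminus, pow_two, Matrix.mul_apply, Fin.sum_univ_two]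
  have h2 : NormedSpace.exp (α • fJplus) = !![1, α; 0, 1] := by
    rw [exp_sq_zero]
    · ext i j; fin_cases i <;> fin_cases j <;> simp [fJplus]
    · ext i j; fin_cases i <;> fin_cases j <;>
        simp [fJplus, pow_two, Matrix.mul_apply, Fin.sum_univ_two]
  have h3 : NormedSpace.exp (((-Real.log r : ℝ) : ℂ) • fJ3) =
      !![(ea : ℂ), 0; 0, (eb : ℂ)] := by
    rw [exp_J3]
  have hab : ea * eb = 1 := by
    rw [hea, heb, ← Real.exp_add]; ring_nf; exact Real.exp_zero
  have haa : (ea : ℝ) * ea = r⁻¹ := by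
    rw [hea, ← Real.exp_add]
    have : -Real.log r / 2 + -Real.log r / 2 = -Real.log r := by ring
    rw [this, Real.exp_neg, Real.exp_log hrpos]
  have hbb : (eb : ℝ) * eb = r := by
    rw [heb, ← Real.exp_add]
    have : -(-Real.log r) / 2 + -(-Real.log r) / 2 = Real.log r := by ring
    rw [this, Real.exp_log hrpos]
  have hM : NormedSpace.exp (z • fJminus) * NormedSpace.exp (α • fJplus) *
      NormedSpace.exp (((-Real.log r : ℝ) : ℂ) • fJ3)
      = !![(ea : ℂ), α * eb; z * ea, (z * α + 1) * eb] := by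
    rw [h1, h2, h3]
    ext i j
    fin_cases i <;> fin_cases j <;>
      simp [Matrix.mul_apply, Fin.sum_univ_two] <;> ring
  have hrne : ((r : ℂ)) ≠ 0 := by exact_mod_cast (ne_of_gt hrpos)
  have hαval : α = -(starRingEnd ℂ z) / (r : ℂ) := by
    rw [hα, hr]; push_cast; ring_nf
  have hzw : z * starRingEnd ℂ z = (r : ℂ) - 1 := by
    rw [Complex.mul_conj, Complex.normSq_eq_norm_sq, hr]; push_cast; ring
  have hA : (ea : ℂ) * (ea : ℂ) * (r : ℂ) = 1 := by
    rw [show ((ea:ℂ)) * (ea:ℂ) = ((ea * ea : ℝ) : ℂ) by push_cast; ring, haa]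
    rw [Complex.ofReal_inv]; field_simp
  have hB : (eb : ℂ) * (eb : ℂ) = (r : ℂ) := by
    rw [show ((eb:ℂ)) * (eb:ℂ) = ((eb * eb : ℝ) : ℂ) by push_cast; ring, hbb]
  have hAB : (ea : ℂ) * (eb : ℂ) = 1 := by
    rw [show ((ea:ℂ)) * (eb:ℂ) = ((ea * eb : ℝ) : ℂ) by push_cast; ring, hab]
    norm_num
  constructor
  · rw [hM]
    ext i j
    fin_cases i <;> fin_cases j <;>
      simp only [hαval, Matrix.mul_apply, Matrix.conjTranspose_apply, Fin.sum_univ_two,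
        Matrix.cons_val', Matrix.cons_val_zero, Matrix.cons_val_one, Matrix.head_cons,
        Matrix.head_fin_const, Matrix.empty_val', Matrix.cons_val_fin_one,
        Matrix.one_apply_eq, Matrix.one_apply_ne, Fin.mk_zero, Fin.mk_one,
        Matrix.of_apply, ne_eq, _root_.map_mul, _root_.map_add, _root_.map_one,
        map_div₀, map_neg, Complex.conj_ofReal, Complex.conj_conj]
    · simp only [Complex.star_def, _root_.map_mul, _root_.map_add, _root_.map_one,
        map_div₀, map_neg, Complex.conj_ofReal, Complex.conj_conj, Matrix.one_apply]
      norm_num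
      field_simp
      linear_combination (r:ℂ) * hA + z * (starRingEnd ℂ z) * hB + (r:ℂ) * hzw
    · simp only [Complex.star_def, _root_.map_mul, _root_.map_add, _root_.map_one,
        map_div₀, map_neg, Complex.conj_ofReal, Complex.conj_conj, Matrix.one_apply]
      norm_num
      field_simp
      linear_combination (starRingEnd ℂ z) * (r:ℂ) * hA - (starRingEnd ℂ z) * ((r:ℂ) - (starRingEnd ℂ z) * z) * hB + (starRingEnd ℂ z) * (r:ℂ) * hzw
    · simp only [Complex.star_def, _root_.map_mul, _root_.map_add, _root_.map_one,
        map_div₀, map_neg, Complex.conj_ofReal, Complex.conj_conj, Matrix.one_apply]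
      norm_num
      field_simp
      linear_combination z * (r:ℂ) * hA - z * ((r:ℂ) - z * (starRingEnd ℂ z)) * hB + z * (r:ℂ) * hzw
    · simp only [Complex.star_def, _root_.map_mul, _root_.map_add, _root_.map_one,
        map_div₀, map_neg, Complex.conj_ofReal, Complex.conj_conj, Matrix.one_apply]
      norm_num
      field_simp
      linear_combination z * (starRingEnd ℂ z) * (r:ℂ) * hA + ((r:ℂ) - z * (starRingEnd ℂ z))^2 * hB + (r:ℂ) * (z * (starRingEnd ℂ z) - (r:ℂ)) * hzw
  · rw [hM, Matrix.det_fin_two_of]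
    have : (ea : ℂ) * ((z * α + 1) * eb) - α * eb * (z * ea) = (ea : ℂ) * eb := by ring
    rw [this, hAB]
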